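/- A subgroup H of an abelian group G is a pure subgroup (i.e., nG ∩ H = nH for all n) if and only if for every finite tuple h̄ from H and every finite system of ℤ-linear equations over h̄ solvable in G, the system is solvable in H. -/

import Mathlib

universe u

/-- A subgroup `H ≤ G` is pure (`nG ∩ H = nH` for all `n`) if and only if
every finite system of `ℤ`-linear equations with parameters from `H` that is solvable in `G`
is solvable in `H`. -/
theorem pure_subgroup_iff_equation_solvability (G : Type u) [AddCommGroup G]
    (H : AddSubgroup G) :
    (∀ (n : ℕ) (h : G), h ∈ H → (∃ g : G, n • g = h) → ∃ h' ∈ H, n • h' = h) ↔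
      ∀ (k m : ℕ) (A : Fin k → Fin m → ℤ) (v : Fin k → G), (∀ i, v i ∈ H) →
        (∃ x : Fin m → G, ∀ i, ∑ j, A i j • x j = v i) →
        ∃ x : Fin m → G, (∀ j, x j ∈ H) ∧ ∀ i, ∑ j, A i j • x j = v i := by
  classical
  constructor
  · intro hp k m A v hv ⟨x0, hx0⟩
    -- purity for integer scalars
    have hpz : ∀ (a : ℤ) (w : G), w ∈ H → (∃ g : G, a • g = w) → ∃ h' ∈ H, a • h' = w := by
      intro a w hw ⟨g, hg⟩
      rcases le_or_gt 0 a with ha | ha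
      · obtain ⟨h', hh', he⟩ := hp a.toNat w hw ⟨g, by
          rw [← hg, ← natCast_zsmul, Int.toNat_of_nonneg ha]⟩
        exact ⟨h', hh', by rw [← natCast_zsmul, Int.toNat_of_nonneg ha] at he; exact he⟩
      · obtain ⟨h', hh', he⟩ := hp (-a).toNat (-w) (neg_mem hw) ⟨g, by
          rw [← natCast_zsmul, Int.toNat_of_nonneg (by omega), neg_zsmul, hg]⟩
        rw [← natCast_zsmul, Int.toNat_of_nonneg (by omega), neg_zsmul] at he
        exact ⟨h', hh', neg_injective he⟩
    set b : Module.Basis (Fin m) ℤ (Fin m → ℤ) := Pi.basisFun ℤ (Fin m) with hb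
    set N : Submodule ℤ (Fin m → ℤ) := Submodule.span ℤ (Set.range A) with hN
    obtain ⟨n, snf⟩ := N.smithNormalForm b
    -- the solution in G as a linear map
    set φ : (Fin m → ℤ) →ₗ[ℤ] G := Module.Basis.constr b ℤ x0 with hφ
    have hφe : ∀ j, φ (b j) = x0 j := fun j => Module.Basis.constr_basis b ℤ x0 j
    have hφA : ∀ i, φ (A i) = v i := by
      intro i
      have hAi : A i = ∑ j, A i j • b j := by
        simpa [hb, Pi.basisFun_repr] using (b.sum_repr (A i)).symm
      conv_lhs => rw [hAi]
      rw [map_sum]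
      simp_rw [map_zsmul, hφe]
      exact hx0 i
    have hφN : ∀ y ∈ N, φ y ∈ H := by
      intro y hy
      induction hy using Submodule.span_induction with
      | mem z hz => obtain ⟨i, rfl⟩ := hz; rw [hφA]; exact hv i
      | zero => rw [map_zero]; exact zero_mem H
      | add y z _ _ hy hz => rw [map_add]; exact add_mem hy hz
      | smul a y _ hy => rw [map_smul]; exact AddSubgroup.zsmul_mem H hy a
    -- choose pure preimages along the SNF basis
    have key : ∀ i : Fin n, ∃ h' ∈ H, snf.a i • h' = φ (snf.bN i) := by
      intro i
      refine hpz (snf.a i) _ (hφN _ (snf.bN i).2) ⟨φ (snf.bM (snf.f i)), ?_⟩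
      rw [← map_zsmul, ← snf.snf i]
    choose h hH hEq using key
    set vals : Fin m → G := fun j => if hj : ∃ i, snf.f i = j then h hj.choose else 0 with hvals
    have hvalsH : ∀ j, vals j ∈ H := by
      intro j
      by_cases hj : ∃ i, snf.f i = j
      · simp only [hvals, dif_pos hj]; apply hH
      · simp only [hvals, dif_neg hj]; exact zero_mem H
    have hvalsf : ∀ i, vals (snf.f i) = h i := by
      intro i
      have hj : ∃ i', snf.f i' = snf.f i := ⟨i, rfl⟩
      have : hj.choose = i := snf.f.injective hj.choose_spec
      simp only [hvals, dif_pos hj, this]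
    set ψ : (Fin m → ℤ) →ₗ[ℤ] G := Module.Basis.constr snf.bM ℤ vals with hψ
    have hψH : ∀ y, ψ y ∈ H := by
      intro y
      rw [hψ, Module.Basis.constr_apply_fintype]
      exact sum_mem (fun j _ => AddSubgroup.zsmul_mem H (hvalsH j) _)
    have hψN : ∀ y ∈ N, ψ y = φ y := by
      have : ψ.comp N.subtype = φ.comp N.subtype := by
        apply Module.Basis.ext snf.bN
        intro i
        simp only [LinearMap.comp_apply, Submodule.subtype_apply]
        rw [snf.snf i, map_zsmul, Module.Basis.constr_basis, hvalsf, hEq, ← snf.snf i]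
      intro y hy
      exact congrArg (· ⟨y, hy⟩) this
    refine ⟨fun j => ψ (b j), fun j => hψH _, ?_⟩
    intro i
    have hAi : A i = ∑ j, A i j • b j := by
      simpa [hb, Pi.basisFun_repr] using (b.sum_repr (A i)).symm
    have hmem : A i ∈ N := Submodule.subset_span ⟨i, rfl⟩
    have hstep : ψ (A i) = ∑ j, A i j • ψ (b j) := by
      conv_lhs => rw [hAi]
      rw [map_sum]; simp_rw [map_zsmul]
    calc ∑ j, A i j • ψ (b j) = ψ (A i) := hstep.symm
      _ = φ (A i) := hψN _ hmem
      _ = v i := hφA i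
  · intro hs n hG hmem ⟨g, hg⟩
    obtain ⟨x, hxH, hxe⟩ := hs 1 1 (fun _ _ => (n : ℤ)) (fun _ => hG) (fun _ => hmem)
      ⟨fun _ => g, fun i => by simp [natCast_zsmul, hg]⟩
    refine ⟨x 0, hxH 0, ?_⟩
    have := hxe 0
    simpa [natCast_zsmul] using this
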